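/- Let A = (a_1,…,a_p) ⊂ ℕ^n (also viewed as an n×p matrix) and b ∈ ℕ^n nonzero, and let k_1, k_2 be positive integers with gcd(k_1,k_2) = 1 and gcd(k_1, gcd(b_1,…,b_n)) = 1. Set C = k_1A ∪ {k_2b} and let r = s(A, k_2b) be the smallest positive integer s such that A·X = s·k_2·b has a solution X ∈ ℤ^p (assumed to exist). If w = y^{k_1 r'}·∏_{j∈J} x_j^{c_j} − ∏_{j∉J} x_j^{e_j} is a binomial in the toric ideal I_C whose two monomials have disjoint supports and r' > 0, then r divides r'. -/

import Mathlib

open MvPolynomial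

lemma prodXpow_inj {k : Type} [Field k] {n : ℕ} {E F : Fin n → ℕ}
    (h : ∏ i, (X i : MvPolynomial (Fin n) k) ^ E i = ∏ i, X i ^ F i) : E = F := by
  have key : ∀ G : Fin n → ℕ, ∏ i, (X i : MvPolynomial (Fin n) k) ^ G i
      = monomial (Finsupp.equivFunOnFinite.symm G) 1 := by
    intro G
    rw [← prod_X_pow_eq_monomial]
    refine (Finset.prod_subset (Finset.subset_univ _) ?_).symm
    intro x _ hx
    simp only [Finsupp.mem_support_iff, not_not] at hx
    simp only [Finsupp.coe_equivFunOnFinite_symm] at hx ⊢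
    simp [hx]
  rw [key, key] at h
  have := monomial_left_injective (one_ne_zero (α := k)) h
  exact Finsupp.equivFunOnFinite.symm.injective this


/-- The toric ideal `I_A ⊆ k[x_j : j ∈ σ]` of a family `A` of vectors in `ℕ^n`:
the kernel of the `k`-algebra map sending `x_j` to `t^{a_j} = ∏ i, t_i^{(a_j)_i}`. -/
noncomputable def toricIdeal (k : Type) [Field k] {σ : Type} {n : ℕ} (A : σ → Fin n → ℕ) :
    Ideal (MvPolynomial σ k) :=
  RingHom.ker (aeval (R := k) fun j => ∏ i, (X i : MvPolynomial (Fin n) k) ^ A j i)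

/-- Let `r = s(A,k₂b)` be the smallest `s > 0` such that `A·X = s·k₂·b` has an integer
solution (assumed to exist). If `w = y^{k₁r'}·∏ x_j^{c_j} − ∏ x_j^{e_j}` is a binomial in
`I_C` (for `C = k₁A ∪ {k₂b}`) whose two monomials have disjoint supports, and `r' > 0`,
then `r` divides `r'`. -/
theorem level_divides (k : Type) [Field k] {n p : ℕ}
    (A : Fin p → Fin n → ℕ) (b : Fin n → ℕ) (hb : b ≠ 0)
    (k1 k2 : ℕ) (hk1 : 0 < k1) (hk2 : 0 < k2)
    (hcop : Nat.Coprime k1 k2) (hcopb : Nat.Coprime k1 (Finset.univ.gcd b))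
    (hex : ∃ s : ℕ, 0 < s ∧
      ∃ Xv : Fin p → ℤ, ∀ i, ∑ j, Xv j * (A j i : ℤ) = (s : ℤ) * (k2 * b i))
    (r' : ℕ) (hr' : 0 < r') (c e : Fin p → ℕ) (hdisj : ∀ j, c j = 0 ∨ e j = 0)
    (hw : (X (Sum.inr ()) ^ (k1 * r') * ∏ j, X (Sum.inl j) ^ c j :
          MvPolynomial (Fin p ⊕ Unit) k) - (∏ j, X (Sum.inl j) ^ e j) ∈
      toricIdeal k (Sum.elim (fun j i => k1 * A j i) (fun _ : Unit => fun i => k2 * b i))) :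
    sInf {s : ℕ | 0 < s ∧
        ∃ Xv : Fin p → ℤ, ∀ i, ∑ j, Xv j * (A j i : ℤ) = (s : ℤ) * (k2 * b i)} ∣ r' := by
  -- Step 1: extract the exponent equation from hw
  rw [toricIdeal, RingHom.mem_ker, map_sub, sub_eq_zero] at hw
  simp only [map_mul, map_pow, map_prod, aeval_X, Sum.elim_inl, Sum.elim_inr] at hw
  simp only [← Finset.prod_pow, ← pow_mul] at hw
  rw [Finset.prod_comm (f := fun (j : Fin p) (i : Fin n) => (X i : MvPolynomial (Fin n) k) ^ (k1 * A j i * c j)),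
      Finset.prod_comm (f := fun (j : Fin p) (i : Fin n) => (X i : MvPolynomial (Fin n) k) ^ (k1 * A j i * e j))] at hw
  simp only [Finset.prod_pow_eq_pow_sum] at hw
  rw [← Finset.prod_mul_distrib] at hw
  simp only [← pow_add] at hw
  have hE := congrFun (prodXpow_inj hw)
  -- Step 2: integer solution with s = r'
  have key : ∀ i, ∑ j, ((e j : ℤ) - c j) * (A j i : ℤ) = (r' : ℤ) * ((k2 : ℤ) * b i) := by
    intro i
    have hz : ((k2 : ℤ) * b i) * (k1 * r') + ∑ j, (k1 : ℤ) * A j i * c j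
        = ∑ j, (k1 : ℤ) * A j i * e j := by exact_mod_cast hE i
    have h2 : (k1 : ℤ) * ∑ j, ((e j : ℤ) - c j) * A j i
        = (k1 : ℤ) * ((r' : ℤ) * ((k2 : ℤ) * b i)) := by
      rw [Finset.mul_sum]
      have hrw : ∀ j, (k1 : ℤ) * (((e j : ℤ) - c j) * A j i)
          = (k1 : ℤ) * A j i * e j - (k1 : ℤ) * A j i * c j := fun j => by ring
      simp only [hrw, Finset.sum_sub_distrib]
      linarith [hz]
    exact mul_left_cancel₀ (by exact_mod_cast hk1.ne' : (k1 : ℤ) ≠ 0) h2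
  -- Step 3: subgroup of ℤ
  set S : Set ℕ := {s : ℕ | 0 < s ∧
      ∃ Xv : Fin p → ℤ, ∀ i, ∑ j, Xv j * (A j i : ℤ) = (s : ℤ) * (k2 * b i)} with hSdef
  let G : AddSubgroup ℤ :=
    { carrier := {s : ℤ | ∃ Xv : Fin p → ℤ, ∀ i, ∑ j, Xv j * (A j i : ℤ) = s * ((k2 : ℤ) * b i)}
      zero_mem' := ⟨0, fun i => by simp⟩
      add_mem' := by
        rintro s t ⟨Xs, hs⟩ ⟨Xt, ht⟩
        exact ⟨Xs + Xt, fun i => by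
          simp only [Pi.add_apply, add_mul, Finset.sum_add_distrib, hs i, ht i]⟩
      neg_mem' := by
        rintro s ⟨Xs, hs⟩
        exact ⟨-Xs, fun i => by
          simp only [Pi.neg_apply, neg_mul, Finset.sum_neg_distrib, hs i]⟩ }
  obtain ⟨a, ha⟩ := Int.subgroup_cyclic G
  have hmem : ∀ x : ℤ, x ∈ G ↔ a ∣ x := fun x => by
    rw [ha, ← AddSubgroup.zmultiples_eq_closure, Int.mem_zmultiples_iff]
  have hdS : sInf S ∈ S := Nat.sInf_mem hex
  have hdpos : 0 < sInf S := hdS.1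
  have hdG : ((sInf S : ℕ) : ℤ) ∈ G := hdS.2
  have hrG : ((r' : ℕ) : ℤ) ∈ G := ⟨fun j => (e j : ℤ) - c j, key⟩
  have had : a ∣ ((sInf S : ℕ) : ℤ) := (hmem _).mp hdG
  have hane : a ≠ 0 := by
    rintro rfl
    have h0 : ((sInf S : ℕ) : ℤ) = 0 := zero_dvd_iff.mp had
    have : sInf S = 0 := by exact_mod_cast h0
    omega
  have haG : a ∈ G := (hmem a).mpr dvd_rfl
  have hG' : ((a.natAbs : ℤ)) ∈ G := by
    rcases Int.natAbs_eq a with h | h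
    · rwa [← h]
    · rw [show ((a.natAbs : ℤ)) = -a by omega]
      exact G.neg_mem haG
  have hnS : a.natAbs ∈ S := ⟨Int.natAbs_pos.mpr hane, hG'⟩
  have h1 : sInf S ≤ a.natAbs := Nat.sInf_le hnS
  have h2 : a.natAbs ∣ sInf S := by
    have := Int.natAbs_dvd_natAbs.mpr had
    simpa using this
  have heq : a.natAbs = sInf S := le_antisymm (Nat.le_of_dvd hdpos h2) h1
  have h3 : a ∣ ((r' : ℕ) : ℤ) := (hmem _).mp hrG
  have h4 : a.natAbs ∣ r' := by
    have := Int.natAbs_dvd_natAbs.mpr h3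
    simpa using this
  rwa [heq] at h4
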